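/- There exists an inverse sequence of finite pointed metric spaces with base-point-preserving submetries as bonding maps that admits no inverse limit in the category of pointed metric spaces with base-point-preserving submetries as morphisms. -/
import Mathlib

/-- A submetry. -/
def IsSubmetry {X Y : Type*} [MetricSpace X] [MetricSpace Y] (π : X → Y) : Prop :=
  LipschitzWith 1 π ∧
    ∀ (y y' : Y) (x : X), π x = y → ∃ x', π x' = y' ∧ dist x x' = dist y y'

/-- Discrete metric on any type with decidable equality. -/
def disc (α : Type) [DecidableEq α] : MetricSpace α where
  dist x y := if x = y then 0 else 1
  dist_self x := by simp
  dist_comm x y := by simp [eq_comm]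
  dist_triangle x y z := by
    by_cases h1 : x = y <;> by_cases h2 : y = z <;> by_cases h3 : x = z <;>
      simp_all
  eq_of_dist_eq_zero := by
    intro x y h
    by_contra hne
    simp [hne] at h

theorem disc_submetry {α β : Type} [DecidableEq α] [DecidableEq β] (f : α → β)
    (hf : Function.Surjective f) : @IsSubmetry α β (disc α) (disc β) f := by
  letI := disc α; letI := disc β
  constructor
  · apply LipschitzWith.of_dist_le_mul
    intro x y
    show (if f x = f y then (0:ℝ) else 1) ≤ 1 * (if x = y then (0:ℝ) else 1)
    split_ifs with h1 h2 <;> try norm_num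
    exact absurd (by rw [‹x = y›]) h1
  · intro y y' x hx
    by_cases h : y = y'
    · refine ⟨x, h ▸ hx, ?_⟩
      subst h
      show (if x = x then (0:ℝ) else 1) = (if y = y then (0:ℝ) else 1)
      simp
    · obtain ⟨x', hx'⟩ := hf y'
      have hne : x ≠ x' := fun he => h (by rw [← hx, he, hx'])
      refine ⟨x', hx', ?_⟩
      show (if x = x' then (0:ℝ) else 1) = (if y = y' then (0:ℝ) else 1)
      simp [hne, h]

def pim (n : ℕ) (j : Fin (n + 2)) : Fin (n + 1) := ⟨min j.val n, by omega⟩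

def un (n : ℕ) (i : ℕ) : Fin (n + 1) := ⟨min i n, by omega⟩

def un' (n : ℕ) (o : Option ℕ) : Fin (n + 1) := o.elim ⟨n, by omega⟩ (un n)

theorem stmt14 :
    ∃ (X : ℕ → Type) (mX : ∀ n, MetricSpace (X n)) (_ : ∀ n, Finite (X n))
      (_ : ∀ n, Nonempty (X n))
      (star : ∀ n, X n) (π : ∀ n, X (n + 1) → X n),
      (∀ n, π n (star (n + 1)) = star n) ∧
      (∀ n, @IsSubmetry (X (n + 1)) (X n) (mX (n + 1)) (mX n) (π n)) ∧
      ¬ ∃ (L : Type) (mL : MetricSpace L) (_ : Nonempty L) (l₀ : L)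
          (p : ∀ n, L → X n),
          (∀ n, p n l₀ = star n) ∧
          (∀ n, @IsSubmetry L (X n) mL (mX n) (p n)) ∧
          (∀ n (x : L), π n (p (n + 1) x) = p n x) ∧
          (∀ (Y : Type) (mY : MetricSpace Y) (_ : Nonempty Y) (y₀ : Y)
            (u : ∀ n, Y → X n),
            (∀ n, u n y₀ = star n) →
            (∀ n, @IsSubmetry Y (X n) mY (mX n) (u n)) →
            (∀ n (y : Y), π n (u (n + 1) y) = u n y) →
            ∃! v : Y → L, v y₀ = l₀ ∧ @IsSubmetry Y L mY mL v ∧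
              ∀ n (y : Y), p n (v y) = u n y) := by
  refine ⟨fun n => Fin (n + 1), fun n => disc _, fun n => inferInstance,
    fun n => ⟨0⟩, fun n => 0, pim, ?_, ?_, ?_⟩
  · intro n; exact Fin.ext (by simp [pim])
  · intro n
    exact disc_submetry _ (fun j => ⟨⟨j.val, by omega⟩, Fin.ext (by simp [pim] <;> omega)⟩)
  · rintro ⟨L, mL, hne, l₀, p, hp0, hpsub, hcomp, huniv⟩
    obtain ⟨v, ⟨hv0, hvsub, hvp⟩, -⟩ := huniv ℕ (disc ℕ) ⟨0⟩ 0 un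
      (fun n => Fin.ext (by simp [un]))
      (fun n => disc_submetry _ (fun j => ⟨j.val, Fin.ext (by simp [un] <;> omega)⟩))
      (fun n i => Fin.ext (by simp [pim, un] <;> omega))
    obtain ⟨v', ⟨hv'0, hv'sub, hv'p⟩, -⟩ := huniv (Option ℕ) (disc (Option ℕ)) ⟨none⟩
      (some 0) un'
      (fun n => Fin.ext (by simp [un', un]))
      (fun n => disc_submetry _ (fun j => ⟨some j.val, Fin.ext (by simp [un', un] <;> omega)⟩))
      (fun n o => by
        cases o with
        | none => exact Fin.ext (by simp [pim, un'] <;> omega)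
        | some i => exact Fin.ext (by simp [pim, un', un] <;> omega))
    obtain ⟨i, hi, -⟩ := hvsub.2 (v 0) (v' none) 0 rfl
    have h1 : p (i + 1) (v i) = un (i + 1) i := hvp (i + 1) i
    have h2 : p (i + 1) (v' none) = un' (i + 1) none := hv'p (i + 1) none
    rw [hi, h2] at h1
    have := congrArg Fin.val h1
    simp [un, un'] at this
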